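/- For every integer k ≥ 3, the function f_k has a unique local minimum on (0,∞), at which it attains the value d_k; moreover, for every d > d_k the equation f_k(λ) = d has precisely two solutions λ ∈ (0,∞). -/

import Mathlib

open Real Set Filter

/-- Upper tail of the Poisson distribution with mean `lam`:
`P[Po(lam) ≥ m] = ∑_{j ≥ m} e^{-lam} lam^j / j!`. -/
noncomputable def poTail (lam : ℝ) (m : ℕ) : ℝ :=
  ∑' j : ℕ, if m ≤ j then Real.exp (-lam) * lam ^ j / (j.factorial : ℝ) else 0

/-- `f_k(λ) = λ / P[Po(λ) ≥ k-1]`. -/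
noncomputable def fPW (k : ℕ) (lam : ℝ) : ℝ := lam / poTail lam (k - 1)

/-- `d_k = inf { f_k(λ) : λ > 0 }`. -/
noncomputable def dPW (k : ℕ) : ℝ := sInf (fPW k '' Set.Ioi (0 : ℝ))

namespace PW

noncomputable def S (n : ℕ) (x : ℝ) : ℝ := ∑ j ∈ Finset.range n, x ^ j / (j.factorial : ℝ)

lemma S_zero (x : ℝ) : S 0 x = 0 := by simp [S]
lemma S_succ (n : ℕ) (x : ℝ) : S (n+1) x = S n x + x ^ n / (n.factorial : ℝ) := by
  simp [S, Finset.sum_range_succ]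

lemma summable_g (lam : ℝ) : Summable (fun j : ℕ => Real.exp (-lam) * lam ^ j / (j.factorial : ℝ)) := by
  have := (Real.summable_pow_div_factorial lam).mul_left (Real.exp (-lam))
  simpa [mul_div_assoc] using this

lemma tsum_g (lam : ℝ) : ∑' j : ℕ, Real.exp (-lam) * lam ^ j / (j.factorial : ℝ) = 1 := by
  have h1 : ∑' j : ℕ, (lam ^ j / (j.factorial : ℝ)) = Real.exp lam := by
    rw [Real.exp_eq_exp_ℝ, NormedSpace.exp_eq_tsum_div]
  calc ∑' j : ℕ, Real.exp (-lam) * lam ^ j / (j.factorial : ℝ)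
      = Real.exp (-lam) * ∑' j : ℕ, (lam ^ j / (j.factorial : ℝ)) := by
        rw [← tsum_mul_left]; simp [mul_div_assoc]
    _ = 1 := by rw [h1, ← Real.exp_add]; simp

lemma poTail_eq (lam : ℝ) (hlam : 0 ≤ lam) (m : ℕ) :
    poTail lam m = 1 - Real.exp (-lam) * S m lam := by
  set g : ℕ → ℝ := fun j => Real.exp (-lam) * lam ^ j / (j.factorial : ℝ) with hg
  have hgnn : ∀ j, 0 ≤ g j := fun j => by
    apply div_nonneg (mul_nonneg (Real.exp_nonneg _) (pow_nonneg hlam _)) (by positivity)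
  set F : ℕ → ℝ := fun j => if m ≤ j then g j else 0 with hF
  have hFsumm : Summable F := by
    apply (summable_g lam).of_nonneg_of_le
    · intro j; by_cases h : m ≤ j <;> simp [hF, h, hgnn j]
    · intro j; by_cases h : m ≤ j <;> simp [hF, h, hgnn j] <;> [exact le_refl _; exact hgnn j]
  have key : ∑ j ∈ Finset.range m, F j + ∑' i : ℕ, F (i + m) = ∑' j, F j :=
    Summable.sum_add_tsum_nat_add m hFsumm
  have key2 : ∑ j ∈ Finset.range m, g j + ∑' i : ℕ, g (i + m) = ∑' j, g j :=
    Summable.sum_add_tsum_nat_add m (summable_g lam)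
  have hFr : ∀ j ∈ Finset.range m, F j = 0 := by
    intro j hj; simp [hF, Nat.not_le.mpr (Finset.mem_range.mp hj)]
  have hFsh : ∀ i : ℕ, F (i + m) = g (i + m) := by
    intro i; simp [hF, Nat.le_add_left]
  have h1 : poTail lam m = ∑' i : ℕ, g (i + m) := by
    rw [poTail]
    have : (fun j : ℕ => if m ≤ j then g j else 0) = F := rfl
    rw [show (∑' j : ℕ, if m ≤ j then Real.exp (-lam) * lam ^ j / (j.factorial : ℝ) else 0) = ∑' j, F j from rfl,
      ← key, Finset.sum_eq_zero hFr]
    simp [hFsh]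
  have hsum : ∑ j ∈ Finset.range m, g j = Real.exp (-lam) * S m lam := by
    rw [S, Finset.mul_sum]
    exact Finset.sum_congr rfl (fun j _ => by rw [hg]; ring)
  rw [h1, ← hsum]
  have := key2
  rw [tsum_g lam] at this
  linarith


noncomputable def T (n : ℕ) (x : ℝ) : ℝ := 1 - Real.exp (-x) * S n x

lemma hasDerivAt_S (n : ℕ) (x : ℝ) : HasDerivAt (S (n+1)) (S n x) x := by
  induction n with
  | zero =>
    have : S 1 = fun _ : ℝ => 1 := by funext y; simp [S]
    rw [this, S_zero]  -- S 0 x = 0? rewrite goal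
    exact hasDerivAt_const x 1
  | succ n ih =>
    have h2 : HasDerivAt (fun y : ℝ => y ^ (n+1) / ((n+1).factorial : ℝ))
        (x ^ n / (n.factorial : ℝ)) x := by
      have := (hasDerivAt_pow (n+1) x).div_const ((n+1).factorial : ℝ)
      refine this.congr_deriv ?_
      rw [Nat.add_sub_cancel, Nat.factorial_succ]; push_cast
      field_simp [Nat.factorial_succ]
    have : HasDerivAt (fun y => S (n+1) y + y ^ (n+1) / ((n+1).factorial : ℝ))
        (S n x + x ^ n / (n.factorial : ℝ)) x := ih.add h2
    have heq : (fun y => S (n+1) y + y ^ (n+1) / ((n+1).factorial : ℝ)) = S (n+2) := by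
      funext y; rw [S_succ (n+1)]
    rw [heq] at this
    rw [S_succ]
    exact this

lemma hasDerivAt_T (n : ℕ) (x : ℝ) :
    HasDerivAt (T (n+1)) (Real.exp (-x) * x ^ n / (n.factorial : ℝ)) x := by
  have h1 : HasDerivAt (fun y : ℝ => Real.exp (-y)) (-Real.exp (-x)) x := by
    simpa [Function.comp_def] using (Real.hasDerivAt_exp (-x)).comp x (hasDerivAt_neg x)
  have h2 := (h1.mul (hasDerivAt_S n x))
  have h3 : HasDerivAt (T (n+1))
      (-(-Real.exp (-x) * S (n+1) x + Real.exp (-x) * S n x)) x := by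
    have := ((hasDerivAt_const x (1:ℝ)).sub h2)
    rw [show T (n+1) = (fun _ => (1:ℝ)) - (fun y => Real.exp (-y)) * S (n+1) from by funext y; simp [T]]
    simpa using this
  convert h3 using 1
  rw [S_succ]
  ring

lemma S_lt_exp {x : ℝ} (hx : 0 < x) (n : ℕ) : S n x < Real.exp x := by
  have h1 : S n x + x ^ n / (n.factorial : ℝ) ≤ Real.exp x := by
    rw [← S_succ]
    exact Real.sum_le_exp_of_nonneg hx.le (n+1)
  have : 0 < x ^ n / (n.factorial : ℝ) := by positivity
  linarith

lemma T_pos {x : ℝ} (hx : 0 < x) (n : ℕ) : 0 < T n x := by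
  have := S_lt_exp hx n
  have h2 : Real.exp (-x) * S n x < Real.exp (-x) * Real.exp x :=
    mul_lt_mul_of_pos_left this (Real.exp_pos _)
  rw [← Real.exp_add] at h2
  simp at h2
  simp [T]; linarith

lemma T_le_one {x : ℝ} (hx : 0 < x) (n : ℕ) : T n x ≤ 1 := by
  have hS : 0 ≤ S n x := Finset.sum_nonneg fun j _ => by positivity
  have : 0 ≤ Real.exp (-x) * S n x := mul_nonneg (Real.exp_nonneg _) hS
  simp [T]; linarith



noncomputable def Q (m : ℕ) (x : ℝ) : ℝ := S (m+2) x + x ^ (m+2) / ((m+1).factorial : ℝ)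
noncomputable def G (m : ℕ) (x : ℝ) : ℝ := Real.exp (-x) * Q m x
noncomputable def fe (n : ℕ) (x : ℝ) : ℝ := x / T n x

lemma hasDerivAt_G (m : ℕ) (x : ℝ) :
    HasDerivAt (G m) (Real.exp (-x) * x ^ (m+1) * (((m:ℝ)+1) - x) / ((m+1).factorial : ℝ)) x := by
  have hexp : HasDerivAt (fun y : ℝ => Real.exp (-y)) (-Real.exp (-x)) x := by
    simpa [Function.comp_def] using (Real.hasDerivAt_exp (-x)).comp x (hasDerivAt_neg x)
  have hpow : HasDerivAt (fun y : ℝ => y ^ (m+2) / ((m+1).factorial : ℝ))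
      (((m:ℝ)+2) * x ^ (m+1) / ((m+1).factorial : ℝ)) x := by
    have := (hasDerivAt_pow (m+2) x).div_const ((m+1).factorial : ℝ)
    refine this.congr_deriv ?_
    rw [show m + 2 - 1 = m + 1 by omega]
    push_cast; ring
  have hQ : HasDerivAt (Q m) (S (m+1) x + ((m:ℝ)+2) * x ^ (m+1) / ((m+1).factorial : ℝ)) x :=
    (hasDerivAt_S (m+1) x).add hpow
  have hmain := hexp.mul hQ
  have heq : (fun y => Real.exp (-y)) * Q m = G m := rfl
  rw [heq] at hmain
  refine hmain.congr_deriv ?_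
  rw [Q, S_succ (m+1)]
  have hfac : (((m+1).factorial : ℝ)) = ((m:ℝ)+1) * (m.factorial : ℝ) := by
    rw [Nat.factorial_succ]; push_cast; ring
  have h1 : (m.factorial : ℝ) ≠ 0 := Nat.cast_ne_zero.mpr m.factorial_ne_zero
  have h2 : ((m+1).factorial : ℝ) ≠ 0 := Nat.cast_ne_zero.mpr (m+1).factorial_ne_zero
  field_simp [hfac]
  ring

lemma S_zero' (n : ℕ) : S (n+1) 0 = 1 := by
  induction n with
  | zero => simp [S]
  | succ n ih => rw [S_succ (n+1), ih]; simp

lemma G_zero (m : ℕ) : G m 0 = 1 := by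
  rw [G, Q, S_zero' (m+1)]; simp

lemma continuous_G (m : ℕ) : Continuous (G m) :=
  continuous_iff_continuousAt.mpr fun x => (hasDerivAt_G m x).continuousAt

lemma deriv_G (m : ℕ) (x : ℝ) :
    deriv (G m) x = Real.exp (-x) * x ^ (m+1) * (((m:ℝ)+1) - x) / ((m+1).factorial : ℝ) :=
  (hasDerivAt_G m x).deriv

lemma G_strictMonoOn (m : ℕ) : StrictMonoOn (G m) (Icc 0 ((m:ℝ)+1)) := by
  apply strictMonoOn_of_deriv_pos (convex_Icc _ _) (continuous_G m).continuousOn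
  intro x hx
  rw [interior_Icc, mem_Ioo] at hx
  rw [deriv_G]
  have h1 : (0:ℝ) < x ^ (m+1) := pow_pos hx.1 _
  have h2 : (0:ℝ) < ((m:ℝ)+1) - x := by linarith [hx.2]
  positivity

lemma G_strictAntiOn (m : ℕ) : StrictAntiOn (G m) (Ici ((m:ℝ)+1)) := by
  apply strictAntiOn_of_deriv_neg (convex_Ici _) (continuous_G m).continuousOn
  intro x hx
  rw [interior_Ici, mem_Ioi] at hx
  rw [deriv_G]
  have hx0 : (0:ℝ) < x := lt_trans (by positivity) hx
  have h1 : (0:ℝ) < x ^ (m+1) := pow_pos hx0 _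
  have h2 : ((m:ℝ)+1) - x < 0 := by linarith
  have h3 : (0:ℝ) < Real.exp (-x) := Real.exp_pos _
  have h4 : (0:ℝ) < ((m+1).factorial : ℝ) := by positivity
  have : Real.exp (-x) * x ^ (m+1) * (((m:ℝ)+1) - x) < 0 :=
    mul_neg_of_pos_of_neg (by positivity) h2
  exact div_neg_of_neg_of_pos this h4

lemma G_tendsto_zero (m : ℕ) : Tendsto (G m) atTop (nhds 0) := by
  have key : ∀ j : ℕ, Tendsto (fun x : ℝ => Real.exp (-x) * (x ^ j / (j.factorial : ℝ))) atTop (nhds 0) := by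
    intro j
    have := (tendsto_pow_mul_exp_neg_atTop_nhds_zero j).div_const ((j.factorial : ℝ))
    simp only [zero_div] at this
    refine this.congr fun x => by ring
  have h1 : Tendsto (fun x : ℝ => Real.exp (-x) * S (m+2) x) atTop (nhds 0) := by
    have : ∀ x : ℝ, Real.exp (-x) * S (m+2) x
        = ∑ j ∈ Finset.range (m+2), Real.exp (-x) * (x ^ j / (j.factorial : ℝ)) := by
      intro x; rw [S, Finset.mul_sum]
    rw [funext this]
    have := tendsto_finset_sum (Finset.range (m+2))
      (fun j _ => key j)
    simpa using this
  have h2 : Tendsto (fun x : ℝ => Real.exp (-x) * (x ^ (m+2) / ((m+1).factorial : ℝ))) atTop (nhds 0) := by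
    have := (tendsto_pow_mul_exp_neg_atTop_nhds_zero (m+2)).div_const ((m+1).factorial : ℝ)
    simp only [zero_div] at this
    refine this.congr fun x => by ring
  have := h1.add h2
  simp only [add_zero] at this
  refine this.congr fun x => ?_
  rw [G, Q]
  ring

lemma G_gt_one_at_peak (m : ℕ) : 1 < G m ((m:ℝ)+1) := by
  have h0 : (0:ℝ) ∈ Icc 0 ((m:ℝ)+1) := ⟨le_refl _, by positivity⟩
  have h1 : ((m:ℝ)+1) ∈ Icc 0 ((m:ℝ)+1) := ⟨by positivity, le_refl _⟩
  have := G_strictMonoOn m h0 h1 (by positivity)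
  rwa [G_zero] at this

/-- Existence and uniqueness of `lam0 > m+1` where `G = 1`. -/
lemma exists_lam0 (m : ℕ) : ∃ l0 : ℝ, ((m:ℝ)+1) < l0 ∧ G m l0 = 1 ∧
    (∀ x ∈ Ioo ((m:ℝ)+1) l0, 1 < G m x) ∧ (∀ x ∈ Ioi l0, G m x < 1) := by
  obtain ⟨b, hb1, hb2⟩ : ∃ b : ℝ, ((m:ℝ)+1) < b ∧ G m b < 1 := by
    have := (G_tendsto_zero m).eventually (eventually_lt_nhds (show (0:ℝ) < 1 by norm_num))
    rcases (this.and (eventually_gt_atTop ((m:ℝ)+1))).exists with ⟨b, hb⟩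
    exact ⟨b, hb.2, hb.1⟩
  obtain ⟨l0, hl0mem, hl0⟩ := intermediate_value_Ioo' (le_of_lt hb1)
    (continuous_G m).continuousOn (show (1:ℝ) ∈ Ioo (G m b) (G m ((m:ℝ)+1)) from
      ⟨hb2, G_gt_one_at_peak m⟩)
  refine ⟨l0, hl0mem.1, hl0, ?_, ?_⟩
  · intro x hx
    have := G_strictAntiOn m (le_of_lt hx.1) (le_of_lt hl0mem.1) hx.2
    rwa [hl0] at this
  · intro x hx
    have hl0m : ((m:ℝ)+1) ≤ l0 := le_of_lt hl0mem.1
    have := G_strictAntiOn m hl0m (le_trans hl0m (le_of_lt hx)) hx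
    rwa [hl0] at this


lemma hasDerivAt_fe (m : ℕ) {x : ℝ} (hx : 0 < x) :
    HasDerivAt (fe (m+2)) ((1 - G m x) / (T (m+2) x)^2) x := by
  have hT := hasDerivAt_T (m+1) x
  have h := (hasDerivAt_id x).div hT (T_pos hx (m+2)).ne'
  refine h.congr_deriv ?_
  have hTne : T (m+2) x ≠ 0 := (T_pos hx (m+2)).ne'
  rw [G, Q, T]
  simp only [id]
  field_simp
  ring

lemma continuousAt_fe (n : ℕ) {x : ℝ} (hx : 0 < x) : ContinuousAt (fe n) x := by
  apply ContinuousAt.div continuousAt_id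
  · have : Continuous (T n) := by
      have : Continuous (S n) := by
        apply continuous_finset_sum
        intro j _
        exact (continuous_pow j).div_const _
      exact continuous_const.sub ((Real.continuous_exp.comp continuous_neg).mul this)
    exact this.continuousAt
  · exact (T_pos hx n).ne'

lemma deriv_fe (m : ℕ) {x : ℝ} (hx : 0 < x) :
    deriv (fe (m+2)) x = (1 - G m x) / (T (m+2) x)^2 := (hasDerivAt_fe m hx).deriv

section main
variable (m : ℕ) (l0 : ℝ) (hl0 : ((m:ℝ)+1) < l0) (hG1 : G m l0 = 1)
  (hGgt : ∀ x ∈ Ioo ((m:ℝ)+1) l0, 1 < G m x) (hGlt : ∀ x ∈ Ioi l0, G m x < 1)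

include hl0 hGgt in
lemma G_gt_one_on {x : ℝ} (hx0 : 0 < x) (hxl : x < l0) : 1 < G m x := by
  rcases le_or_gt x ((m:ℝ)+1) with h | h
  · have := G_strictMonoOn m ⟨le_refl _, by positivity⟩ ⟨hx0.le, h⟩ hx0
    rwa [G_zero] at this
  · exact hGgt x ⟨h, hxl⟩

include hl0 hGgt in
lemma fe_strictAntiOn : StrictAntiOn (fe (m+2)) (Ioc 0 l0) := by
  have hl0pos : 0 < l0 := lt_trans (by positivity) hl0
  apply strictAntiOn_of_deriv_neg (convex_Ioc _ _)
  · intro x hx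
    exact (continuousAt_fe (m+2) hx.1).continuousWithinAt
  · intro x hx
    rw [interior_Ioc] at hx
    rw [deriv_fe m hx.1]
    have h1 : 1 < G m x := G_gt_one_on m l0 hl0 hGgt hx.1 hx.2
    have h2 : (0:ℝ) < (T (m+2) x)^2 := pow_pos (T_pos hx.1 _) 2
    apply div_neg_of_neg_of_pos (by linarith) h2

include hl0 hGlt in
lemma fe_strictMonoOn : StrictMonoOn (fe (m+2)) (Ici l0) := by
  have hl0pos : 0 < l0 := lt_trans (by positivity) hl0
  apply strictMonoOn_of_deriv_pos (convex_Ici _)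
  · intro x hx
    exact (continuousAt_fe (m+2) (lt_of_lt_of_le hl0pos hx)).continuousWithinAt
  · intro x hx
    rw [interior_Ici] at hx
    have hxpos : 0 < x := lt_trans hl0pos hx
    rw [deriv_fe m hxpos]
    have h1 : G m x < 1 := hGlt x hx
    have h2 : (0:ℝ) < (T (m+2) x)^2 := pow_pos (T_pos hxpos _) 2
    apply div_pos (by linarith) h2

include hl0 hGgt hGlt in
lemma fe_min : ∀ x : ℝ, 0 < x → fe (m+2) l0 ≤ fe (m+2) x := by
  have hl0pos : 0 < l0 := lt_trans (by positivity) hl0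
  intro x hx
  rcases le_or_gt x l0 with h | h
  · rcases eq_or_lt_of_le h with rfl | h'
    · exact le_refl _
    · exact le_of_lt ((fe_strictAntiOn m l0 hl0 hGgt) ⟨hx, h⟩ ⟨hl0pos, le_refl _⟩ h')
  · exact le_of_lt ((fe_strictMonoOn m l0 hl0 hGlt) (le_refl l0) h.le h)

end main

lemma fe_ge_self {x : ℝ} (hx : 0 < x) (n : ℕ) : x ≤ fe n x := by
  rw [fe]
  calc x = x / 1 := (div_one x).symm
  _ ≤ x / T n x := by
      apply div_le_div_of_nonneg_left hx.le (T_pos hx n) (T_le_one hx n)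

/-- Upper bound on `T` near `0`. -/
lemma T_le_near_zero (n : ℕ) (hn : 0 < n) {x : ℝ} (hx : 0 < x) (hx1 : x ≤ 1) :
    T n x ≤ x ^ n * ((n:ℝ)+1) / ((n.factorial : ℝ) * n) := by
  have hb := Real.exp_bound' hx.le hx1 hn
  have h1 : Real.exp x - S n x ≤ x ^ n * ((n:ℝ)+1) / ((n.factorial : ℝ) * n) := by
    rw [S]; push_cast at hb ⊢; linarith
  have h3 : T n x = Real.exp (-x) * (Real.exp x - S n x) := by
    rw [T, mul_sub, ← Real.exp_add]
    simp
  rw [h3]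
  have h4 : Real.exp (-x) ≤ 1 := Real.exp_le_one_iff.mpr (by linarith)
  have h5 : 0 ≤ Real.exp x - S n x := by linarith [S_lt_exp hx n]
  calc Real.exp (-x) * (Real.exp x - S n x) ≤ 1 * (Real.exp x - S n x) :=
        mul_le_mul_of_nonneg_right h4 h5
    _ = Real.exp x - S n x := one_mul _
    _ ≤ x ^ n * ((n:ℝ)+1) / ((n.factorial : ℝ) * n) := h1


lemma fe_large_near_zero (m : ℕ) (d : ℝ) {ε : ℝ} (hε : 0 < ε) :
    ∃ x : ℝ, 0 < x ∧ x < ε ∧ d < fe (m+2) x := by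
  set n := m + 2 with hn
  set C : ℝ := ((n:ℝ)+1) / ((n.factorial : ℝ) * n) with hC
  have hCpos : 0 < C := by positivity
  set x : ℝ := min (ε/2) (min 1 (1 / (C * (|d|+1)))) with hxdef
  have hd1 : 0 < |d| + 1 := by positivity
  have hx0 : 0 < x := by
    apply lt_min (by linarith)
    apply lt_min one_pos
    positivity
  have hx1 : x ≤ 1 := le_trans (min_le_right _ _) (min_le_left _ _)
  have hxd : x ≤ 1 / (C * (|d|+1)) := le_trans (min_le_right _ _) (min_le_right _ _)
  have hxε : x < ε := lt_of_le_of_lt (min_le_left _ _) (by linarith)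
  refine ⟨x, hx0, hxε, ?_⟩
  have hT : T n x ≤ x ^ n * C := by
    have := T_le_near_zero n (by omega) hx0 hx1
    calc T n x ≤ x ^ n * ((n:ℝ)+1) / ((n.factorial : ℝ) * n) := this
      _ = x ^ n * C := by rw [hC]; ring
  have hxn : x ^ n ≤ x ^ 2 := pow_le_pow_of_le_one hx0.le hx1 (by omega)
  have hT2 : T n x ≤ x ^ 2 * C := le_trans hT (by
    apply mul_le_mul_of_nonneg_right hxn hCpos.le)
  have hTpos : 0 < T n x := T_pos hx0 n
  have h1 : x / (x ^ 2 * C) ≤ fe n x := by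
    rw [fe]
    apply div_le_div_of_nonneg_left hx0.le hTpos hT2
  have h2 : x / (x ^ 2 * C) = 1 / (x * C) := by
    rw [pow_two]
    rw [div_eq_div_iff (by positivity) (by positivity)]
    ring
  have h3 : |d| + 1 ≤ 1 / (x * C) := by
    rw [le_div_iff₀ (by positivity)]
    have : x * C * (|d|+1) ≤ (1 / (C * (|d|+1))) * C * (|d|+1) := by
      apply mul_le_mul_of_nonneg_right (mul_le_mul_of_nonneg_right hxd hCpos.le) hd1.le
    calc (|d|+1) * (x * C) = x * C * (|d|+1) := by ring
      _ ≤ (1 / (C * (|d|+1))) * C * (|d|+1) := this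
      _ = 1 := by field_simp
  have h4 : d < |d| + 1 := lt_of_le_of_lt (le_abs_self d) (by linarith)
  calc d < |d| + 1 := h4
    _ ≤ 1 / (x * C) := h3
    _ = x / (x ^ 2 * C) := h2.symm
    _ ≤ fe n x := h1

lemma fPW_eq_fe (k : ℕ) (hk : 3 ≤ k) {x : ℝ} (hx : 0 < x) :
    fPW k x = fe (k-1) x := by
  rw [fPW, poTail_eq x hx.le]
  rfl

end PW

open PW

theorem stmt_1 (k : ℕ) (hk : 3 ≤ k) :
    (∃ lam0 : ℝ, 0 < lam0 ∧ IsLocalMinOn (fPW k) (Set.Ioi (0 : ℝ)) lam0 ∧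
      fPW k lam0 = dPW k ∧
      ∀ lam : ℝ, 0 < lam → IsLocalMinOn (fPW k) (Set.Ioi (0 : ℝ)) lam → lam = lam0) ∧
    ∀ d : ℝ, dPW k < d → ∃ lam1 lam2 : ℝ, lam1 ≠ lam2 ∧
      ∀ lam : ℝ, (0 < lam ∧ fPW k lam = d) ↔ (lam = lam1 ∨ lam = lam2) := by
  obtain ⟨m, hm⟩ : ∃ m : ℕ, k - 1 = m + 2 := ⟨k - 3, by omega⟩
  obtain ⟨l0, hl0, hG1, hGgt, hGlt⟩ := exists_lam0 m
  have hl0pos : (0:ℝ) < l0 := lt_trans (by positivity) hl0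
  have hfeq : ∀ x : ℝ, 0 < x → fPW k x = fe (m+2) x := by
    intro x hx; rw [fPW_eq_fe k hk hx, hm]
  have hanti : StrictAntiOn (fPW k) (Ioc 0 l0) := by
    intro x hx y hy hxy
    rw [hfeq x hx.1, hfeq y hy.1]
    exact fe_strictAntiOn m l0 hl0 hGgt hx hy hxy
  have hmono : StrictMonoOn (fPW k) (Ici l0) := by
    intro x hx y hy hxy
    rw [hfeq x (lt_of_lt_of_le hl0pos hx), hfeq y (lt_of_lt_of_le hl0pos hy)]
    exact fe_strictMonoOn m l0 hl0 hGlt hx hy hxy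
  have hmin : ∀ x : ℝ, 0 < x → fPW k l0 ≤ fPW k x := by
    intro x hx
    rw [hfeq x hx, hfeq l0 hl0pos]
    exact fe_min m l0 hl0 hGgt hGlt x hx
  have hdEq : dPW k = fPW k l0 := by
    apply IsLeast.csInf_eq
    constructor
    · exact ⟨l0, hl0pos, rfl⟩
    · rintro y ⟨x, hx, rfl⟩
      exact hmin x hx
  constructor
  · refine ⟨l0, hl0pos, ?_, hdEq.symm, ?_⟩
    · exact eventually_nhdsWithin_of_forall (fun x hx => hmin x hx)
    · intro lam hlam hloc
      by_contra hne
      have hloc' : ∀ᶠ x in nhds lam, fPW k lam ≤ fPW k x := by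
        have : nhdsWithin lam (Ioi (0:ℝ)) = nhds lam :=
          nhdsWithin_eq_nhds.mpr (Ioi_mem_nhds hlam)
        rw [← this]
        exact hloc
      rw [Metric.eventually_nhds_iff] at hloc'
      obtain ⟨δ, hδ, hball⟩ := hloc'
      rcases lt_or_gt_of_ne hne with hlt | hgt
      · -- lam < l0 : points slightly to the right are smaller
        set y : ℝ := min ((lam + l0)/2) (lam + δ/2) with hy
        have hy1 : lam < y := lt_min (by linarith) (by linarith)
        have hy2 : y ≤ (lam + l0)/2 := min_le_left _ _
        have hyl0 : y < l0 := lt_of_le_of_lt hy2 (by linarith)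
        have hydist : dist y lam < δ := by
          rw [Real.dist_eq, abs_of_pos (by linarith : (0:ℝ) < y - lam)]
          have : y ≤ lam + δ/2 := min_le_right _ _
          linarith
        have hcontr := hball hydist
        have : fPW k y < fPW k lam :=
          hanti ⟨hlam, hlt.le⟩ ⟨lt_trans hlam hy1, hyl0.le⟩ hy1
        linarith
      · -- l0 < lam : points slightly to the left are smaller
        set y : ℝ := max ((l0 + lam)/2) (lam - δ/2) with hy
        have hy1 : y < lam := max_lt (by linarith) (by linarith)
        have hy2 : (l0 + lam)/2 ≤ y := le_max_left _ _
        have hyl0 : l0 < y := lt_of_lt_of_le (by linarith) hy2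
        have hydist : dist y lam < δ := by
          rw [Real.dist_eq, abs_of_neg (by linarith : y - lam < 0)]
          have : lam - δ/2 ≤ y := le_max_right _ _
          linarith
        have hcontr := hball hydist
        have : fPW k y < fPW k lam := hmono hyl0.le (le_of_lt (lt_trans hyl0 hy1)) hy1
        linarith
  · intro d hd
    rw [hdEq] at hd
    -- a point near 0 with large value
    obtain ⟨a, ha0, hal0, had⟩ := fe_large_near_zero m d hl0pos
    have had' : d < fPW k a := by rw [hfeq a ha0]; exact had
    -- a point far out with large value
    set b : ℝ := max (l0 + 1) (d + 1) with hb
    have hbl0 : l0 < b := lt_of_lt_of_le (by linarith) (le_max_left _ _)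
    have hbpos : 0 < b := lt_trans hl0pos hbl0
    have hbd : d < fPW k b := by
      rw [hfeq b hbpos]
      calc d < d + 1 := by linarith
        _ ≤ b := le_max_right _ _
        _ ≤ fe (m+2) b := fe_ge_self hbpos _
    -- continuity on closed intervals within (0, ∞)
    have hcontOn : ∀ p q : ℝ, 0 < p → ContinuousOn (fPW k) (Icc p q) := by
      intro p q hp
      intro x hx
      have hx0 : 0 < x := lt_of_lt_of_le hp hx.1
      have : ContinuousAt (fPW k) x := by
        have h1 : ContinuousAt (fe (m+2)) x := continuousAt_fe (m+2) hx0
        apply h1.congr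
        have : ∀ᶠ y in nhds x, fe (m+2) y = fPW k y := by
          have hev : ∀ᶠ y in nhds x, 0 < y := eventually_gt_nhds hx0
          exact hev.mono fun y hy => (hfeq y hy).symm
        exact this
      exact this.continuousWithinAt
    -- IVT on [a, l0]
    have hIVT1 : ∃ lam1 ∈ Ioo a l0, fPW k lam1 = d := by
      have := intermediate_value_Ioo' hal0.le (hcontOn a l0 ha0)
      have hmem : d ∈ Ioo (fPW k l0) (fPW k a) := ⟨hd, had'⟩
      obtain ⟨lam1, h1, h2⟩ := this hmem
      exact ⟨lam1, h1, h2⟩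
    have hIVT2 : ∃ lam2 ∈ Ioo l0 b, fPW k lam2 = d := by
      have := intermediate_value_Ioo hbl0.le (hcontOn l0 b hl0pos)
      have hmem : d ∈ Ioo (fPW k l0) (fPW k b) := ⟨hd, hbd⟩
      obtain ⟨lam2, h1, h2⟩ := this hmem
      exact ⟨lam2, h1, h2⟩
    obtain ⟨lam1, hlam1mem, hlam1⟩ := hIVT1
    obtain ⟨lam2, hlam2mem, hlam2⟩ := hIVT2
    have hlam1pos : 0 < lam1 := lt_trans ha0 hlam1mem.1
    have hlam2pos : 0 < lam2 := lt_trans hl0pos hlam2mem.1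
    refine ⟨lam1, lam2, ne_of_lt (lt_trans hlam1mem.2 hlam2mem.1), ?_⟩
    intro lam
    constructor
    · rintro ⟨hlampos, hlamd⟩
      rcases le_or_gt lam l0 with hle | hgt
      · left
        have h1 : lam ∈ Ioc (0:ℝ) l0 := ⟨hlampos, hle⟩
        have h2 : lam1 ∈ Ioc (0:ℝ) l0 := ⟨hlam1pos, hlam1mem.2.le⟩
        exact hanti.injOn h1 h2 (by rw [hlamd, hlam1])
      · right
        have h1 : lam ∈ Ici l0 := hgt.le
        have h2 : lam2 ∈ Ici l0 := hlam2mem.1.le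
        exact hmono.injOn h1 h2 (by rw [hlamd, hlam2])
    · rintro (rfl | rfl)
      · exact ⟨hlam1pos, hlam1⟩
      · exact ⟨hlam2pos, hlam2⟩
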